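/- arXiv:2103.09287 — 8 statements merged into one kernel-verified Lean document; each statement's English description precedes it below -/
import Mathlib

section
/- Let α > 0, let f : ℝ → ℝ be differentiable and α-strongly convex, let x < y, and set ε = α(y − x)²/4. Suppose F_x, F_y ∈ ℝ satisfy |F_x − f(x)| ≤ ε/2 and |F_y − f(y)| ≤ ε/2, and define the estimated secant g = (F_y − F_x + ε)/(y − x). Then f'(x) ≤ (f(y) − f(x))/(y − x) ≤ g ≤ f'(y). -/
/-- Deterministic version of the conservative secant estimate:
if `F_x, F_y` approximate `f(x), f(y)` to within `ε/2` where `ε = α(y-x)²/4`,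
then the estimated secant `g = (F_y - F_x + ε)/(y - x)` satisfies
`f'(x) ≤ (f(y) - f(x))/(y - x) ≤ g ≤ f'(y)`. -/
theorem conservative_secant_estimate
    (α : ℝ) (hα : 0 < α)
    (f : ℝ → ℝ) (hf : Differentiable ℝ f)
    (hsc : ∀ x y : ℝ, f y ≥ f x + deriv f x * (y - x) + α / 2 * (y - x) ^ 2)
    (x y : ℝ) (hxy : x < y)
    (ε : ℝ) (hε : ε = α * (y - x) ^ 2 / 4)
    (Fx Fy : ℝ) (hFx : |Fx - f x| ≤ ε / 2) (hFy : |Fy - f y| ≤ ε / 2)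
    (g : ℝ) (hg : g = (Fy - Fx + ε) / (y - x)) :
    deriv f x ≤ (f y - f x) / (y - x) ∧
    (f y - f x) / (y - x) ≤ g ∧
    g ≤ deriv f y := by
  have hd : 0 < y - x := by linarith
  have h1 := hsc x y
  have h2 := hsc y x
  have hsq : 0 ≤ α / 2 * (y - x) ^ 2 := by positivity
  rw [abs_le] at hFx hFy
  refine ⟨?_, ?_, ?_⟩
  · rw [le_div_iff₀ hd]; nlinarith
  · rw [hg, div_le_div_iff₀ hd hd]
    have hε2 : α / 2 * (y - x) ^ 2 = 2 * ε := by rw [hε]; ring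
    nlinarith
  · rw [hg, div_le_iff₀ hd]
    have h2' : deriv f y * (y - x) ≥ f y - f x + α / 2 * (y - x) ^ 2 := by nlinarith
    nlinarith
end

section
/- Let α > 0, let f : ℝ → ℝ be differentiable and α-strongly convex, let x < y, let p ∈ (0,1), and let n be a natural number with n ≥ 32·log(2/p)/(α²(y − x)⁴). On a probability space, let ε_1, …, ε_n, ε'_1, …, ε'_n be 2n independent, identically distributed real random variables with mean zero, each supported in an interval of length at most 1. Define the sample averages F_x = f(x) + (1/n)·Σ_{i=1}^n ε_i and F_y = f(y) + (1/n)·Σ_{i=1}^n ε'_i, and the estimated secant g = (F_y − F_x + α(y − x)²/4)/(y − x). Then with probability at least (1 − p)², we have f'(x) ≤ (f(y) − f(x))/(y − x) ≤ g ≤ f'(y). -/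
open MeasureTheory ProbabilityTheory

open Real

lemma mgf_pair_bound {Ω : Type*} [MeasurableSpace Ω] (μ : Measure Ω) [IsProbabilityMeasure μ]
    {X : Ω → ℝ} (hX : Measurable X) {a b : ℝ} (hab : b - a ≤ 1)
    (hmem : ∀ ω, X ω ∈ Set.Icc a b) (t : ℝ) :
    mgf X μ t * mgf X μ (-t) ≤ exp (t ^ 2 / 4) := by
  set c : ℝ := (a + b) / 2 with hc
  have hZ : ∀ ω, |X ω - c| ≤ 1 / 2 := by
    intro ω
    obtain ⟨h1, h2⟩ := hmem ω
    rw [abs_le]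
    constructor <;> simp only [hc] <;> linarith
  have hbdd : ∀ ω, |t * (X ω - c)| ≤ |t / 2| := by
    intro ω
    rw [abs_mul, abs_div]
    calc |t| * |X ω - c| ≤ |t| * (1 / 2) :=
          mul_le_mul_of_nonneg_left (hZ ω) (abs_nonneg t)
      _ = |t| / 2 := by ring
      _ ≤ |t| / |2| := by norm_num
  have hmeasZ : Measurable fun ω => t * (X ω - c) := (hX.sub_const c).const_mul t
  have hcosh_int : Integrable (fun ω => cosh (t * (X ω - c))) μ := by
    refine Integrable.mono' (integrable_const (cosh (t / 2)))
      (Real.continuous_cosh.measurable.comp hmeasZ).aestronglyMeasurable ?_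
    filter_upwards with ω
    rw [Real.norm_eq_abs, abs_of_pos (Real.cosh_pos _)]
    exact Real.cosh_le_cosh.2 (by simpa using hbdd ω)
  have hsinh_int : Integrable (fun ω => sinh (t * (X ω - c))) μ := by
    refine Integrable.mono' (integrable_const (cosh (t / 2)))
      (Real.continuous_sinh.measurable.comp hmeasZ).aestronglyMeasurable ?_
    filter_upwards with ω
    rw [Real.norm_eq_abs, Real.abs_sinh]
    calc sinh |t * (X ω - c)| ≤ cosh |t * (X ω - c)| := (Real.sinh_lt_cosh _).le
      _ ≤ cosh (t / 2) := Real.cosh_le_cosh.2 (by simpa using hbdd ω)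
  set C : ℝ := ∫ ω, cosh (t * (X ω - c)) ∂μ with hCdef
  set Sn : ℝ := ∫ ω, sinh (t * (X ω - c)) ∂μ with hSdef
  have hCpos : 0 ≤ C := integral_nonneg fun ω => (Real.cosh_pos _).le
  have hCle : C ≤ cosh (t / 2) := by
    calc C ≤ ∫ _, cosh (t / 2) ∂μ :=
          integral_mono hcosh_int (integrable_const _)
            (fun ω => Real.cosh_le_cosh.2 (by simpa using hbdd ω))
      _ = cosh (t / 2) := by simp
  have hmgf_t : mgf X μ t = exp (t * c) * (C + Sn) := by
    have h1 : ∀ ω, exp (t * X ω)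
        = exp (t * c) * (cosh (t * (X ω - c)) + sinh (t * (X ω - c))) := by
      intro ω
      rw [Real.cosh_add_sinh, ← Real.exp_add]
      ring_nf
    rw [mgf]
    simp_rw [h1]
    rw [integral_const_mul, integral_add hcosh_int hsinh_int]
  have hmgf_nt : mgf X μ (-t) = exp (-(t * c)) * (C - Sn) := by
    have h1 : ∀ ω, exp (-t * X ω)
        = exp (-(t * c)) * (cosh (t * (X ω - c)) - sinh (t * (X ω - c))) := by
      intro ω
      rw [Real.cosh_sub_sinh, ← Real.exp_add]
      ring_nf
    rw [mgf]
    simp_rw [h1]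
    rw [integral_const_mul, integral_sub hcosh_int hsinh_int]
  have hCsq : C ^ 2 ≤ exp (t ^ 2 / 4) := by
    have h8 : C ≤ exp (t ^ 2 / 8) := hCle.trans (by
      have := Real.cosh_le_exp_half_sq (t / 2)
      calc cosh (t / 2) ≤ exp ((t / 2) ^ 2 / 2) := this
        _ = exp (t ^ 2 / 8) := by ring_nf)
    calc C ^ 2 ≤ exp (t ^ 2 / 8) ^ 2 := pow_le_pow_left₀ hCpos h8 2
      _ = exp (t ^ 2 / 4) := by
          rw [← Real.exp_nat_mul]
          norm_num
          ring_nf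
  calc mgf X μ t * mgf X μ (-t)
      = (exp (t * c) * exp (-(t * c))) * ((C + Sn) * (C - Sn)) := by
        rw [hmgf_t, hmgf_nt]; ring
    _ = C ^ 2 - Sn ^ 2 := by rw [← Real.exp_add]; ring_nf; rw [Real.exp_zero]; ring
    _ ≤ C ^ 2 := by nlinarith [sq_nonneg Sn]
    _ ≤ exp (t ^ 2 / 4) := hCsq

lemma secant_key {α f' fx fy x y : ℝ} (hα : 0 < α)
    (hscx : fy ≥ fx + f' * (y - x) + α / 2 * (y - x) ^ 2)
    (hd : 0 < y - x) :
    f' ≤ (fy - fx) / (y - x) := by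
  rw [le_div_iff₀ hd]
  nlinarith [sq_nonneg (y - x)]

lemma secant_key2 {fx fy x y u s0 : ℝ} (hd : 0 < y - x) (hs0 : 0 < s0)
    (hu1 : -s0 ≤ u) :
    (fy - fx) / (y - x) ≤ (fy - fx + (u + s0)) / (y - x) := by
  rw [div_le_div_iff₀ hd hd]
  nlinarith [hs0, hd, hu1]

lemma secant_key3 {α f' fx fy x y u : ℝ} (hα : 0 < α)
    (hscy : fx ≥ fy + f' * (x - y) + α / 2 * (x - y) ^ 2)
    (hd : 0 < y - x) (hu2 : u ≤ α * (y - x) ^ 2 / 4) :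
    (fy - fx + (u + α * (y - x) ^ 2 / 4)) / (y - x) ≤ f' := by
  rw [div_le_iff₀ hd]
  nlinarith [hscy, hu2]

set_option maxHeartbeats 2000000 in
/-- Gradient estimation from noisy function evaluations: with
`n ≥ 32 log(2/p) / (α² (y-x)⁴)` i.i.d. mean-zero noise variables of support
diameter at most 1 at each of `x` and `y`, the estimated secant
`g = (F̄_y - F̄_x + α(y-x)²/4)/(y-x)` built from the sample averages satisfies
`f'(x) ≤ (f(y)-f(x))/(y-x) ≤ g ≤ f'(y)` with probability at least `(1-p)²`. -/
theorem noisy_secant_estimate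
    {Ω : Type*} [MeasurableSpace Ω] (μ : Measure Ω) [IsProbabilityMeasure μ]
    (α : ℝ) (hα : 0 < α)
    (f : ℝ → ℝ) (hf : Differentiable ℝ f)
    (hsc : ∀ x y : ℝ, f y ≥ f x + deriv f x * (y - x) + α / 2 * (y - x) ^ 2)
    (x y : ℝ) (hxy : x < y)
    (p : ℝ) (hp : p ∈ Set.Ioo (0 : ℝ) 1)
    (n : ℕ) (hn : 32 * Real.log (2 / p) / (α ^ 2 * (y - x) ^ 4) ≤ (n : ℝ))
    -- the `2n` noise variables: `e (Sum.inl i) = ε_i` (noise at `x`) and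
    -- `e (Sum.inr i) = ε'_i` (noise at `y`)
    (e : Fin n ⊕ Fin n → Ω → ℝ)
    (hmeas : ∀ i, Measurable (e i))
    (hindep : iIndepFun e μ)
    (hident : ∀ i j, IdentDistrib (e i) (e j) μ μ)
    (hmean : ∀ i, ∫ ω, e i ω ∂μ = 0)
    (hsupp : ∀ i, ∃ a b : ℝ, b - a ≤ 1 ∧ ∀ ω, e i ω ∈ Set.Icc a b)
    -- the sample averages and the estimated secant
    (Fx Fy g : Ω → ℝ)
    (hFx : ∀ ω, Fx ω = f x + (1 / (n : ℝ)) * ∑ i : Fin n, e (Sum.inl i) ω)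
    (hFy : ∀ ω, Fy ω = f y + (1 / (n : ℝ)) * ∑ i : Fin n, e (Sum.inr i) ω)
    (hg : ∀ ω, g ω = (Fy ω - Fx ω + α * (y - x) ^ 2 / 4) / (y - x)) :
    ENNReal.ofReal ((1 - p) ^ 2) ≤
      μ {ω | deriv f x ≤ (f y - f x) / (y - x) ∧
             (f y - f x) / (y - x) ≤ g ω ∧
             g ω ≤ deriv f y} := by
  
  classical
  obtain ⟨hp0, hp1⟩ := hp
  have hd : (0:ℝ) < y - x := sub_pos.2 hxy
  have hL : 0 < Real.log (2 / p) := Real.log_pos (by rw [lt_div_iff₀ hp0]; linarith)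
  have hden : (0:ℝ) < α ^ 2 * (y - x) ^ 4 := by positivity
  have hn0 : (0:ℝ) < n := lt_of_lt_of_le (by positivity) hn
  have hnnat : 0 < n := by exact_mod_cast hn0
  set s0 : ℝ := α * (y - x) ^ 2 / 4 with hs0_def
  have hs0 : 0 < s0 := by rw [hs0_def]; positivity
  have hkey : 2 * Real.log (2 / p) ≤ (n:ℝ) * s0 ^ 2 := by
    rw [div_le_iff₀ hden] at hn
    rw [hs0_def]
    nlinarith [hn]
  set cc : Fin n ⊕ Fin n → ℝ := Sum.elim (fun _ => (-1:ℝ)) (fun _ => 1) with hcc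
  set Y : Fin n ⊕ Fin n → Ω → ℝ := fun i ω => cc i * e i ω with hYdef
  have hYmeas : ∀ i, Measurable (Y i) := fun i => (hmeas i).const_mul _
  have hYindep : iIndepFun Y μ :=
    hindep.comp (fun i u => cc i * u) (fun i => measurable_const_mul _)
  obtain ⟨a, b, hab, hmemab⟩ := hsupp (Sum.inl ⟨0, hnnat⟩)
  have hm_id : ∀ i (t' : ℝ), mgf (e i) μ t' = mgf (e (Sum.inl ⟨0, hnnat⟩)) μ t' := by
    intro i t'
    exact ((hident i _).comp (Real.measurable_exp.comp (measurable_id.const_mul t'))).integral_eq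
  have hmgfS : ∀ t' : ℝ, mgf (∑ i, Y i) μ t' ≤ Real.exp ((n:ℝ) * (t' ^ 2 / 4)) := by
    intro t'
    have hsum := hYindep.mgf_sum (t := t') hYmeas Finset.univ
    have hinl : ∀ j : Fin n, mgf (Y (Sum.inl j)) μ t'
        = mgf (e (Sum.inl ⟨0, hnnat⟩)) μ (-t') := by
      intro j
      have hYj : Y (Sum.inl j) = -(e (Sum.inl j)) := by
        funext ω; simp [hYdef, hcc]
      rw [hYj, mgf_neg, hm_id]
    have hinr : ∀ j : Fin n, mgf (Y (Sum.inr j)) μ t'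
        = mgf (e (Sum.inl ⟨0, hnnat⟩)) μ t' := by
      intro j
      have hYj : Y (Sum.inr j) = e (Sum.inr j) := by
        funext ω; simp [hYdef, hcc]
      rw [hYj, hm_id]
    rw [hsum, Fintype.prod_sum_type]
    simp only [hinl, hinr, Finset.prod_const, Finset.card_univ, Fintype.card_fin]
    rw [← mul_pow]
    calc (mgf (e (Sum.inl ⟨0, hnnat⟩)) μ (-t') * mgf (e (Sum.inl ⟨0, hnnat⟩)) μ t') ^ n
        ≤ Real.exp (t' ^ 2 / 4) ^ n := by
          apply pow_le_pow_left₀ (mul_nonneg mgf_nonneg mgf_nonneg)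
          rw [mul_comm]
          exact mgf_pair_bound μ (hmeas _) hab hmemab t'
      _ = Real.exp ((n:ℝ) * (t' ^ 2 / 4)) := (Real.exp_nat_mul _ n).symm
  have hcc1 : ∀ i, |cc i| = 1 := by rintro (j | j) <;> simp [hcc]
  have hint : ∀ t' : ℝ, Integrable (fun ω => Real.exp (t' * (∑ i, Y i) ω)) μ := by
    intro t'
    apply hYindep.integrable_exp_mul_sum hYmeas
    intro i _
    obtain ⟨ai, bi, habi, hmemi⟩ := hsupp i
    have hb : ∀ ω, |Y i ω| ≤ max |ai| |bi| := by
      intro ω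
      have h1 : |e i ω| ≤ max |ai| |bi| := abs_le_max_abs_abs (hmemi ω).1 (hmemi ω).2
      calc |Y i ω| = |cc i| * |e i ω| := by rw [hYdef, ← abs_mul]
        _ = |e i ω| := by rw [hcc1 i, one_mul]
        _ ≤ max |ai| |bi| := h1
    refine Integrable.mono' (integrable_const (Real.exp (|t'| * max |ai| |bi|)))
      ((Real.measurable_exp.comp ((hYmeas i).const_mul t')).aestronglyMeasurable) ?_
    filter_upwards with ω
    rw [Real.norm_eq_abs, Real.abs_exp]
    apply Real.exp_le_exp.2
    calc t' * Y i ω ≤ |t' * Y i ω| := le_abs_self _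
      _ = |t'| * |Y i ω| := abs_mul _ _
      _ ≤ |t'| * max |ai| |bi| := mul_le_mul_of_nonneg_left (hb ω) (abs_nonneg _)
  have hup : (μ {ω | (n:ℝ) * s0 ≤ (∑ i, Y i) ω}).toReal
      ≤ Real.exp (-((n:ℝ) * s0 ^ 2)) := by
    have h := measure_ge_le_exp_mul_mgf (μ := μ) (X := ∑ i, Y i) ((n:ℝ) * s0)
      (t := 2 * s0) (by positivity) (hint _)
    refine h.trans ?_
    calc Real.exp (-(2 * s0) * ((n:ℝ) * s0)) * mgf (∑ i, Y i) μ (2 * s0)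
        ≤ Real.exp (-(2 * s0) * ((n:ℝ) * s0)) * Real.exp ((n:ℝ) * ((2 * s0) ^ 2 / 4)) :=
          mul_le_mul_of_nonneg_left (hmgfS _) (Real.exp_pos _).le
      _ = Real.exp (-((n:ℝ) * s0 ^ 2)) := by rw [← Real.exp_add]; congr 1; ring
  have hlow : (μ {ω | (∑ i, Y i) ω ≤ -((n:ℝ) * s0)}).toReal
      ≤ Real.exp (-((n:ℝ) * s0 ^ 2)) := by
    have h := measure_le_le_exp_mul_mgf (μ := μ) (X := ∑ i, Y i) (-((n:ℝ) * s0))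
      (t := -(2 * s0)) (by linarith) (hint _)
    refine h.trans ?_
    calc Real.exp (-(-(2 * s0)) * -((n:ℝ) * s0)) * mgf (∑ i, Y i) μ (-(2 * s0))
        ≤ Real.exp (-(-(2 * s0)) * -((n:ℝ) * s0)) * Real.exp ((n:ℝ) * ((-(2 * s0)) ^ 2 / 4)) :=
          mul_le_mul_of_nonneg_left (hmgfS _) (Real.exp_pos _).le
      _ = Real.exp (-((n:ℝ) * s0 ^ 2)) := by rw [← Real.exp_add]; congr 1; ring
  have htail : Real.exp (-((n:ℝ) * s0 ^ 2)) ≤ p ^ 2 / 4 := by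
    have h1 : Real.exp (-((n:ℝ) * s0 ^ 2)) ≤ Real.exp (-(2 * Real.log (2 / p))) :=
      Real.exp_le_exp.2 (by linarith)
    refine h1.trans_eq ?_
    rw [show -(2 * Real.log (2 / p)) = -Real.log (2 / p) + -Real.log (2 / p) by ring,
      Real.exp_add, Real.exp_neg, Real.exp_log (by positivity), inv_div]
    ring
  have hSmeas : Measurable (∑ i, Y i : Ω → ℝ) := by
    have h : (∑ i, Y i : Ω → ℝ) = fun ω => ∑ i, Y i ω := by
      funext ω; simp [Finset.sum_apply]
    rw [h]
    exact Finset.measurable_sum _ (fun i _ => hYmeas i)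
  set E : Set Ω := {ω | |(∑ i, Y i) ω| ≤ (n:ℝ) * s0} with hEdef
  have hEmeas : MeasurableSet E := measurableSet_le hSmeas.abs measurable_const
  have hcompl : (μ Eᶜ).toReal ≤ p ^ 2 / 2 := by
    have hsub2 : Eᶜ ⊆ {ω | (n:ℝ) * s0 ≤ (∑ i, Y i) ω}
        ∪ {ω | (∑ i, Y i) ω ≤ -((n:ℝ) * s0)} := by
      intro ω hω
      simp only [hEdef, Set.mem_compl_iff, Set.mem_setOf_eq, not_le] at hω
      rcases lt_abs.1 hω with h | h
      · exact Set.mem_union_left _ h.le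
      · refine Set.mem_union_right _ ?_
        simp only [Set.mem_setOf_eq]
        linarith
    have h2 : μ Eᶜ ≤ μ {ω | (n:ℝ) * s0 ≤ (∑ i, Y i) ω}
        + μ {ω | (∑ i, Y i) ω ≤ -((n:ℝ) * s0)} :=
      (measure_mono hsub2).trans (measure_union_le _ _)
    have h3 : (μ Eᶜ).toReal ≤ (μ {ω | (n:ℝ) * s0 ≤ (∑ i, Y i) ω}).toReal
        + (μ {ω | (∑ i, Y i) ω ≤ -((n:ℝ) * s0)}).toReal := by
      rw [← ENNReal.toReal_add (measure_ne_top μ _) (measure_ne_top μ _)]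
      exact ENNReal.toReal_mono
        (ENNReal.add_ne_top.2 ⟨measure_ne_top μ _, measure_ne_top μ _⟩) h2
    linarith
  have htot : (μ E).toReal + (μ Eᶜ).toReal = 1 := by
    rw [← ENNReal.toReal_add (measure_ne_top μ _) (measure_ne_top μ _),
      measure_add_measure_compl hEmeas]
    simp
  have hsubT : E ⊆ {ω | deriv f x ≤ (f y - f x) / (y - x) ∧
      (f y - f x) / (y - x) ≤ g ω ∧ g ω ≤ deriv f y} := by
    intro ω hω
    simp only [hEdef, Set.mem_setOf_eq] at hω ⊢
    have hSval : (∑ i, Y i) ω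
        = (∑ i : Fin n, e (Sum.inr i) ω) - ∑ i : Fin n, e (Sum.inl i) ω := by
      simp [hYdef, hcc, Finset.sum_apply, Fintype.sum_sum_type]
      ring
    have hu : |(1 / (n:ℝ)) * (∑ i, Y i) ω| ≤ s0 := by
      rw [abs_mul, abs_of_pos (by positivity : (0:ℝ) < 1 / (n:ℝ))]
      calc 1 / (n:ℝ) * |(∑ i, Y i) ω| ≤ 1 / (n:ℝ) * ((n:ℝ) * s0) :=
            mul_le_mul_of_nonneg_left hω (by positivity)
        _ = s0 := by field_simp
    obtain ⟨hu1, hu2⟩ := abs_le.1 hu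
    have hgω : g ω = (f y - f x + ((1 / (n:ℝ)) * (∑ i, Y i) ω + s0)) / (y - x) := by
      rw [hg ω, hFy ω, hFx ω, hSval, hs0_def]
      ring_nf
    refine ⟨secant_key hα (hsc x y) hd, ?_, ?_⟩
    · rw [hgω]
      exact secant_key2 hd hs0 hu1
    · rw [hgω, hs0_def] at *
      exact secant_key3 hα (hsc y x) hd hu2
  refine le_trans ?_ (measure_mono hsubT)
  refine ENNReal.ofReal_le_of_le_toReal ?_
  have hq : (1 - p) ^ 2 ≤ 1 - p ^ 2 / 2 := by nlinarith [hp0, hp1]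
  linarith [hcompl, htot, hq]
end

section
/- Let 0 < α ≤ β, let f : ℝ → ℝ be differentiable, α-strongly convex, and β-smooth, let x* ∈ ℝ satisfy f'(x*) = 0, let δ > 0 and γ > 1, and let N be a natural number. Let x : ℕ → ℝ be a sequence with x_1 ≤ x* such that for every t < N, setting s_t = (f(x_t) − f(x_t − δ))/δ (the secant from the lagged point x_t − δ to x_t), we have −(1/β)·s_t ≥ (1 + γ)·δ and x_{t+1} = x_t − δ − (1/β)·s_t. Then for all t ≤ N: x_t ≤ x_{t+1} − δ (in particular the points x_1 − δ, x_1, x_2 − δ, x_2, … are nondecreasing) and x_{t+1} ≤ x*. -/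
/-- Monotonicity / no-overshoot for noiseless Lagged Gradient
Descent: while the lagged secant is steep (`-(1/β)·s_t ≥ (1+γ)δ`) and
`x_{t+1} = x_t - δ - (1/β)·s_t` with `s_t = (f(x_t) - f(x_t - δ))/δ`, the
sampled points are nondecreasing (`x_t ≤ x_{t+1} - δ`) and never overshoot the
stationary point `x*`. -/
theorem lgd_noiseless_monotone_no_overshoot
    (α β : ℝ) (hα : 0 < α) (hαβ : α ≤ β)
    (f : ℝ → ℝ) (hf : Differentiable ℝ f)
    (hsc : ∀ x y : ℝ, f y ≥ f x + deriv f x * (y - x) + α / 2 * (y - x) ^ 2)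
    (hsm : ∀ x y : ℝ, f y ≤ f x + deriv f x * (y - x) + β / 2 * (y - x) ^ 2)
    (xs : ℝ) (hxs : deriv f xs = 0)
    (δ γ : ℝ) (hδ : 0 < δ) (hγ : 1 < γ)
    (N : ℕ) (x : ℕ → ℝ) (hx1 : x 1 ≤ xs)
    (hstep : ∀ t : ℕ, 1 ≤ t → t < N →
      -(1 / β) * ((f (x t) - f (x t - δ)) / δ) ≥ (1 + γ) * δ ∧
      x (t + 1) = x t - δ - (1 / β) * ((f (x t) - f (x t - δ)) / δ)) :
    (∀ t : ℕ, 1 ≤ t → t < N → x t ≤ x (t + 1) - δ) ∧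
    (∀ t : ℕ, 1 ≤ t → t ≤ N → x t ≤ xs) := by
  have hβ : 0 < β := lt_of_lt_of_le hα hαβ
  have key : ∀ t : ℕ, 1 ≤ t → t < N → x t ≤ xs → x (t + 1) ≤ xs := by
    intro t ht htN hxt
    obtain ⟨hsteep, heq⟩ := hstep t ht htN
    set s := (f (x t) - f (x t - δ)) / δ with hs
    -- lower bound on the secant from smoothness
    have h1 := hsm (x t) (x t - δ)
    have hslb : deriv f (x t) - β * δ / 2 ≤ s := by
      rw [hs, le_div_iff₀ hδ]
      nlinarith [h1]
    -- derivative bound: -f'(x t) ≤ β (xs - x t)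
    have hd : -deriv f (x t) ≤ β * (xs - x t) := by
      rcases eq_or_lt_of_le hxt with h | h
      · rw [h, hxs]; simp
      · have a := hsm (x t) xs
        have b := hsm xs (x t)
        rw [hxs] at b
        nlinarith [a, b, h]
    have h3 : -β * ((xs - x t) + δ / 2) ≤ s := by linarith
    have h4 : -(1 / β) * s ≤ (xs - x t) + δ / 2 := by
      have h5 := mul_le_mul_of_nonneg_left h3 (le_of_lt (one_div_pos.mpr hβ))
      have e : (1 / β) * (-β * ((xs - x t) + δ / 2)) = -((xs - x t) + δ / 2) := by
        field_simp
      rw [e] at h5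
      linarith
    rw [heq]
    linarith
  have mono : ∀ t : ℕ, 1 ≤ t → t < N → x t ≤ x (t + 1) - δ := by
    intro t ht htN
    obtain ⟨hsteep, heq⟩ := hstep t ht htN
    rw [heq]
    have : 0 < (γ - 1) * δ := mul_pos (sub_pos.mpr hγ) hδ
    nlinarith [hsteep]
  refine ⟨mono, ?_⟩
  intro t
  induction t with
  | zero => intro h; omega
  | succ n ih =>
    intro _ hle
    rcases Nat.eq_zero_or_pos n with h0 | h1
    · subst h0; exact hx1
    · exact key n h1 (Nat.lt_of_succ_le hle) (ih h1 (le_of_lt (Nat.lt_of_succ_le hle)))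
end

section
/- Let 0 < α ≤ β, let f : ℝ → ℝ be differentiable, α-strongly convex, and β-smooth, let p_min ∈ ℝ and x* > p_min with f'(x*) = 0, and fix γ > 1. Then there exists a constant C > 0 (depending only on α, β, γ, f, p_min, x*) such that the following holds for every natural number T ≥ 2 with T^{-1/2} ≤ x* − p_min. Set δ = T^{-1/2}, and define x_1 = p_min + δ and recursively for t ≥ 1: s_t = (f(x_t) − f(x_t − δ))/δ; if −(1/β)·s_t ≥ (1 + γ)δ, set x_{t+1} = x_t − δ − (1/β)·s_t, and otherwise set x_{t+1} = x_t. Let τ be the least t with −(1/β)·s_t < (1 + γ)δ if such t ≤ ⌊T/2⌋ exists, and τ = ⌊T/2⌋ otherwise. Then the total regret, namely Σ_{t=1}^{τ} [(f(x_t − δ) − f(x*)) + (f(x_t) − f(x*))] + (T − 2τ)·(f(x_τ) − f(x*)) when T ≥ 2τ, is at most C; in particular it is bounded independently of T. -/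
set_option maxHeartbeats 1000000

private theorem lgd_aux_geom (q : ℝ) (h0 : 0 ≤ q) (h1 : q < 1) (n : ℕ) :
    ∑ i ∈ Finset.range n, q ^ i ≤ 1 / (1 - q) := by
  have hq : (1:ℝ) - q > 0 := by linarith
  calc ∑ i ∈ Finset.range n, q ^ i = (q ^ n - 1) / (q - 1) := geom_sum_eq h1.ne n
    _ = (1 - q ^ n) / (1 - q) := by rw [← neg_div_neg_eq]; ring_nf
    _ ≤ 1 / (1 - q) := by gcongr; nlinarith [pow_nonneg h0 n]

private theorem lgd_aux_sq (a b : ℝ) : (a + b) ^ 2 ≤ 2 * a ^ 2 + 2 * b ^ 2 := by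
  nlinarith [sq_nonneg (a - b)]

/-- Constant-regret bound for noiseless Lagged Gradient
Descent: there is a constant `C > 0`, independent of the horizon `T`, bounding
the total regret of the algorithm with lag `δ = T^{-1/2}` started at
`x_1 = p_min + δ`, run for `⌊T/2⌋` rounds and stabilizing at the first iterate
`x_τ` where the secant condition `-(1/β)·s_t ≥ (1+γ)δ` fails. -/
theorem lgd_noiseless_constant_regret
    (α β : ℝ) (hα : 0 < α) (hαβ : α ≤ β)
    (f : ℝ → ℝ) (hf : Differentiable ℝ f)
    (hsc : ∀ x y : ℝ, f y ≥ f x + deriv f x * (y - x) + α / 2 * (y - x) ^ 2)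
    (hsm : ∀ x y : ℝ, f y ≤ f x + deriv f x * (y - x) + β / 2 * (y - x) ^ 2)
    (pmin xs : ℝ) (hpx : pmin < xs) (hxs : deriv f xs = 0)
    (γ : ℝ) (hγ : 1 < γ) :
    ∃ C : ℝ, 0 < C ∧
      ∀ T : ℕ, 2 ≤ T →
      ∀ δ : ℝ, δ = (T : ℝ) ^ (-(1 : ℝ) / 2) → δ ≤ xs - pmin →
      ∀ x : ℕ → ℝ, x 1 = pmin + δ →
      (∀ t : ℕ, 1 ≤ t →
        x (t + 1) =
          if (1 + γ) * δ ≤ -(1 / β) * ((f (x t) - f (x t - δ)) / δ) then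
            x t - δ - (1 / β) * ((f (x t) - f (x t - δ)) / δ)
          else x t) →
      ∀ τ : ℕ, 1 ≤ τ → τ ≤ T / 2 →
      (∀ t : ℕ, 1 ≤ t → t < τ →
        (1 + γ) * δ ≤ -(1 / β) * ((f (x t) - f (x t - δ)) / δ)) →
      (-(1 / β) * ((f (x τ) - f (x τ - δ)) / δ) < (1 + γ) * δ ∨ τ = T / 2) →
      2 * τ ≤ T →
      (∑ t ∈ Finset.Icc 1 τ, ((f (x t - δ) - f xs) + (f (x t) - f xs))) +
        ((T : ℝ) - 2 * (τ : ℝ)) * (f (x τ) - f xs) ≤ C := by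
  have hβ : 0 < β := lt_of_lt_of_le hα hαβ
  obtain ⟨D, hDdef⟩ : ∃ D : ℝ, D = xs - pmin := ⟨_, rfl⟩
  have hD0 : 0 < D := by rw [hDdef]; linarith
  have hK1 : (1:ℝ) ≤ β / α := (one_le_div hα).mpr hαβ
  refine ⟨2*β*D^2*(β/α) + β*(β/α+1)^2 + β^3*(1+γ)^2/(2*α^2) + β/2*D^2*(β/α+1)^2 + 1,
    by positivity, ?_⟩
  intro T hT δ hδ hδD x hx1 hx τ hτ1 hτT hact hstop h2τ
  rw [← hDdef] at hδD
  have hTpos : (0:ℝ) < T := by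
    have : (0:ℕ) < T := by omega
    exact_mod_cast this
  have hδpos : 0 < δ := by rw [hδ]; positivity
  have hδsq : δ ^ 2 = ((T:ℝ))⁻¹ := by
    rw [hδ, ← Real.rpow_natCast _ 2, ← Real.rpow_mul hTpos.le]
    norm_num
    rw [Real.rpow_neg_one]
  obtain ⟨ρ, hρdef⟩ : ∃ ρ : ℝ, ρ = 1 - α / β := ⟨_, rfl⟩
  have hρ0 : 0 ≤ ρ := by
    have : α / β ≤ 1 := (div_le_one hβ).mpr hαβ
    rw [hρdef]; linarith
  have hρ1 : ρ < 1 := by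
    have : 0 < α / β := by positivity
    rw [hρdef]; linarith
  obtain ⟨d1, hd1def⟩ : ∃ d1 : ℝ, d1 = xs - pmin - δ := ⟨_, rfl⟩
  have hd10 : 0 ≤ d1 := by rw [hd1def, hDdef] at *; linarith
  have hd1D : d1 ≤ D := by rw [hd1def, hDdef]; linarith
  -- regret bounds
  have hreg_ub : ∀ p : ℝ, f p - f xs ≤ β/2 * (xs - p)^2 := by
    intro p; have := hsm xs p; rw [hxs] at this; nlinarith [sq_nonneg (p - xs)]
  have hreg_lb : ∀ p : ℝ, 0 ≤ f p - f xs := by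
    intro p; have := hsc xs p; rw [hxs] at this; nlinarith [sq_nonneg (p - xs)]
  -- gradient product bounds
  have hgl : ∀ y : ℝ, deriv f y * (xs - y) ≤ -α * (xs - y)^2 := by
    intro y; have h1 := hsc y xs; have h2 := hsc xs y; rw [hxs] at h2; nlinarith
  have hgu : ∀ y : ℝ, -(β * (xs - y)^2) ≤ deriv f y * (xs - y) := by
    intro y; have h1 := hsm y xs; have h2 := hsm xs y; rw [hxs] at h2; nlinarith
  -- secant slope bounds
  have hSub : ∀ t : ℕ, (f (x t) - f (x t - δ)) / δ ≤ deriv f (x t) := by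
    intro t; have := hsc (x t) (x t - δ)
    rw [div_le_iff₀ hδpos]; nlinarith [sq_nonneg δ]
  have hSlb : ∀ t : ℕ, deriv f (x t - δ) ≤ (f (x t) - f (x t - δ)) / δ := by
    intro t; have := hsc (x t - δ) (x t)
    rw [le_div_iff₀ hδpos]; nlinarith [sq_nonneg δ]
  -- invariant
  have hinv : ∀ n : ℕ, 1 ≤ n → n ≤ τ →
      0 ≤ xs - x n ∧ xs - x n ≤ ρ^(n-1) * d1 + δ * (β/α) := by
    intro n hn
    induction n, hn using Nat.le_induction with
    | base =>
      intro _
      rw [hx1]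
      have hδDr : δ ≤ xs - pmin := by rw [hDdef] at hδD; linarith
      constructor
      · linarith
      · have h0 : 0 ≤ δ * (β/α) := by positivity
        rw [show (1:ℕ)-1 = 0 from rfl, pow_zero, one_mul, hd1def]
        linarith
    | succ t ht ih =>
      intro hle
      have htτ : t < τ := by omega
      obtain ⟨hd0, hdU⟩ := ih (by omega)
      have hcond := hact t ht htτ
      have hstep : x (t+1) = x t - δ - (1/β) * ((f (x t) - f (x t - δ)) / δ) := by
        rw [hx t ht, if_pos hcond]
      obtain ⟨st, hstdef⟩ : ∃ st : ℝ, st = (f (x t) - f (x t - δ)) / δ := ⟨_, rfl⟩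
      rw [← hstdef] at hcond hstep
      obtain ⟨d, hddef⟩ : ∃ d : ℝ, d = xs - x t := ⟨_, rfl⟩
      rw [← hddef] at hd0 hdU
      have hSub' := hSub t; have hSlb' := hSlb t
      rw [← hstdef] at hSub' hSlb'
      have hScond : (1+γ)*δ*β ≤ -st := by
        rw [show -(1/β)*st = -st/β by ring] at hcond
        exact (le_div_iff₀ hβ).mp hcond
      -- st ≤ -α d
      have hSd : st ≤ -(α * d) := by
        rcases eq_or_lt_of_le hd0 with h | h
        · have hp : 0 < (1+γ)*δ*β := by positivity
          have h0 : st ≤ 0 := by linarith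
          rw [← h]; simpa using h0
        · have h1 := hgl (x t)
          rw [← hddef] at h1
          have h5 : st * d ≤ -(α * d) * d := by
            linarith [mul_le_mul_of_nonneg_right hSub' hd0]
          exact (mul_le_mul_iff_of_pos_right h).mp h5
      -- st ≥ -β (d + δ)
      have hSl : -(β*(d+δ)) ≤ st := by
        have h1 := hgu (x t - δ)
        have heq : xs - (x t - δ) = d + δ := by rw [hddef]; ring
        rw [heq] at h1
        have he : 0 < d + δ := by linarith
        have h5 : -(β*(d+δ)) * (d+δ) ≤ st * (d+δ) := by
          linarith [mul_le_mul_of_nonneg_right hSlb' he.le]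
        exact (mul_le_mul_iff_of_pos_right he).mp h5
      constructor
      · rw [hstep]
        have h3 : (1/β) * (-(β*(d+δ))) ≤ (1/β) * st :=
          mul_le_mul_of_nonneg_left hSl (by positivity)
        have h4 : (1/β) * (-(β*(d+δ))) = -(d+δ) := by
          field_simp
        rw [h4] at h3
        have hgoal : xs - (x t - δ - 1/β * st) = d + δ + (1/β) * st := by
          rw [hddef]; ring
        rw [hgoal]; linarith
      · rw [hstep]
        have h3 : (1/β) * st ≤ (1/β) * (-(α*d)) :=
          mul_le_mul_of_nonneg_left hSd (by positivity)
        have h4 : (1/β) * (-(α*d)) = -(α/β*d) := by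
          ring
        rw [h4] at h3
        have hmono : ρ * d ≤ ρ * (ρ^(t-1)*d1 + δ*(β/α)) :=
          mul_le_mul_of_nonneg_left hdU hρ0
        have hρd : ρ * d = d - α/β*d := by rw [hρdef]; ring
        have hρalg : ρ*(δ*(β/α)) = δ*(β/α) - δ := by
          rw [hρdef]; field_simp
        have hpow : ρ^(t+1-1) = ρ^(t-1) * ρ := by
          rw [show t+1-1 = (t-1)+1 from by omega, pow_succ]
        rw [hpow]
        have hgoal : xs - (x t - δ - 1/β * st) = d + δ + (1/β) * st := by
          rw [hddef]; ring
        rw [hgoal]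
        linarith [hmono, hρd, hρalg, h3]
  -- sum bound
  obtain ⟨q, hqdef⟩ : ∃ q : ℝ, q = ρ^2 := ⟨_, rfl⟩
  have hq0 : 0 ≤ q := by rw [hqdef]; positivity
  have hq1 : q < 1 := by
    rw [hqdef]
    first
      | exact pow_lt_one₀ hρ0 hρ1 two_ne_zero
      | exact pow_lt_one hρ0 hρ1 two_ne_zero
      | nlinarith [hρ0, hρ1]
  have hgeo2 : 1/(1-q) ≤ β/α := by
    have h1q : α/β ≤ 1 - q := by
      rw [hqdef, hρdef]
      have h1 : α/β ≤ 1 := (div_le_one hβ).mpr hαβ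
      have h2 : 0 < α/β := by positivity
      nlinarith [mul_nonneg h2.le (by linarith : (0:ℝ) ≤ 1 - α/β)]
    have := one_div_le_one_div_of_le (by positivity) h1q
    rwa [one_div_div] at this
  have hterm : ∀ t ∈ Finset.Icc 1 τ,
      (f (x t - δ) - f xs) + (f (x t) - f xs)
        ≤ 2*β*d1^2*q^(t-1) + 2*β*δ^2*(β/α+1)^2 := by
    intro t htmem
    rw [Finset.mem_Icc] at htmem
    obtain ⟨hd0, hdU⟩ := hinv t htmem.1 htmem.2
    have h1 := hreg_ub (x t)
    have h2 := hreg_ub (x t - δ)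
    obtain ⟨d, hddef⟩ : ∃ d : ℝ, d = xs - x t := ⟨_, rfl⟩
    rw [← hddef] at hd0 hdU h1
    have heq : xs - (x t - δ) = d + δ := by rw [hddef]; ring
    rw [heq] at h2
    obtain ⟨r, hrdef⟩ : ∃ r : ℝ, r = ρ^(t-1) * d1 := ⟨_, rfl⟩
    rw [← hrdef] at hdU
    have hr0 : 0 ≤ r := by
      rw [hrdef]; exact mul_nonneg (pow_nonneg hρ0 _) hd10
    have hq_eq : q^(t-1) = (ρ^(t-1))^2 := by
      rw [hqdef, ← pow_mul, ← pow_mul, Nat.mul_comm]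
    have hu : d + δ ≤ r + δ*(β/α+1) := by linarith [hdU]
    have hsq1 : (d+δ)^2 ≤ (r + δ*(β/α+1))^2 :=
      pow_le_pow_left₀ (by linarith) hu 2
    have hsq2 : d^2 ≤ (d+δ)^2 := pow_le_pow_left₀ hd0 (by linarith) 2
    have hsq3 : (r + δ*(β/α+1))^2 ≤ 2*r^2 + 2*(δ*(β/α+1))^2 :=
      lgd_aux_sq r (δ*(β/α+1))
    have hbig : (d+δ)^2 + d^2 ≤ 4*r^2 + 4*(δ*(β/α+1))^2 := by linarith
    have hr2 : 2*β*r^2 = 2*β*d1^2*q^(t-1) := by rw [hrdef, hq_eq]; ring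
    linarith [mul_le_mul_of_nonneg_left hbig (by positivity : (0:ℝ) ≤ β/2), hr2, h1, h2]
  have hsum1 : ∑ t ∈ Finset.Icc 1 τ, ((f (x t - δ) - f xs) + (f (x t) - f xs))
      ≤ ∑ t ∈ Finset.Icc 1 τ, (2*β*d1^2*q^(t-1) + 2*β*δ^2*(β/α+1)^2) :=
    Finset.sum_le_sum hterm
  have hsum2 : ∑ t ∈ Finset.Icc 1 τ, (2*β*d1^2*q^(t-1) + 2*β*δ^2*(β/α+1)^2)
      = 2*β*d1^2 * (∑ t ∈ Finset.Icc 1 τ, q^(t-1)) + (τ:ℝ) * (2*β*δ^2*(β/α+1)^2) := by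
    rw [Finset.sum_add_distrib, ← Finset.mul_sum, Finset.sum_const, Nat.card_Icc]
    simp [nsmul_eq_mul]
  have hgeoIcc : ∑ t ∈ Finset.Icc 1 τ, q^(t-1) ≤ β/α := by
    have heq : ∑ t ∈ Finset.Icc 1 τ, q^(t-1) = ∑ i ∈ Finset.range τ, q^i := by
      rw [← Finset.Ico_add_one_right_eq_Icc, Finset.sum_Ico_eq_sum_range]
      simp
    rw [heq]
    exact (lgd_aux_geom q hq0 hq1 τ).trans hgeo2
  have hτδ : (τ:ℝ) * δ^2 ≤ 1/2 := by
    have hτle : (2*(τ:ℝ)) ≤ (T:ℝ) := by exact_mod_cast h2τ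
    rw [hδsq]
    have h5 := mul_le_mul_of_nonneg_right hτle (inv_nonneg.mpr hTpos.le)
    rw [mul_inv_cancel₀ hTpos.ne'] at h5
    linarith
  have hsum3 : ∑ t ∈ Finset.Icc 1 τ, ((f (x t - δ) - f xs) + (f (x t) - f xs))
      ≤ 2*β*D^2*(β/α) + β*(β/α+1)^2 := by
    have hA : 2*β*d1^2 * (∑ t ∈ Finset.Icc 1 τ, q^(t-1)) ≤ 2*β*d1^2*(β/α) :=
      mul_le_mul_of_nonneg_left hgeoIcc (by positivity)
    have hA2 : 2*β*d1^2*(β/α) ≤ 2*β*D^2*(β/α) := by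
      have h5 : d1^2 ≤ D^2 := pow_le_pow_left₀ hd10 hd1D 2
      have h6 := mul_le_mul_of_nonneg_right
        (mul_le_mul_of_nonneg_left h5 (by positivity : (0:ℝ) ≤ 2*β))
        (by positivity : (0:ℝ) ≤ β/α)
      linarith
    have hB : (τ:ℝ) * (2*β*δ^2*(β/α+1)^2) ≤ β*(β/α+1)^2 := by
      have heq5 : (τ:ℝ) * (2*β*δ^2*(β/α+1)^2) = ((τ:ℝ)*δ^2) * (2*β*(β/α+1)^2) := by ring
      rw [heq5]
      linarith [mul_le_mul_of_nonneg_right hτδ (by positivity : (0:ℝ) ≤ 2*β*(β/α+1)^2)]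
    linarith [hsum1, hsum2.le, hsum2.ge]
  -- terminal term
  have hregτ0 : 0 ≤ f (x τ) - f xs := hreg_lb _
  have hTτ : 0 ≤ (T:ℝ) - 2*(τ:ℝ) := by
    have : (2*(τ:ℝ)) ≤ (T:ℝ) := by exact_mod_cast h2τ
    linarith
  obtain ⟨hd0τ, hdUτ⟩ := hinv τ hτ1 le_rfl
  have hfinal : ((T:ℝ) - 2*(τ:ℝ)) * (f (x τ) - f xs)
      ≤ β^3*(1+γ)^2/(2*α^2) + β/2*D^2*(β/α+1)^2 := by
    have hnn2 : (0:ℝ) ≤ β/2*D^2*(β/α+1)^2 := by positivity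
    have hnn1 : (0:ℝ) ≤ β^3*(1+γ)^2/(2*α^2) := by positivity
    rcases hstop with hfail | heqτ
    · -- secant condition failed at τ
      have hst : -((f (x τ) - f (x τ - δ)) / δ) < β*((1+γ)*δ) := by
        rw [show -(1/β)*((f (x τ) - f (x τ - δ)) / δ)
              = -((f (x τ) - f (x τ - δ)) / δ)/β by ring] at hfail
        have := (div_lt_iff₀ hβ).mp hfail
        linarith
      have hfl : xs - x τ ≤ (β/α)*(1+γ)*δ := by
        rcases eq_or_lt_of_le hd0τ with h | h
        · rw [← h]; positivity
        · have h1 := hgl (x τ)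
          have h2 := hSub τ
          have hderiv : -deriv f (x τ) < β*((1+γ)*δ) := by linarith
          have h5 : (α*(xs - x τ)) * (xs - x τ) ≤ (-deriv f (x τ)) * (xs - x τ) := by
            linarith [h1]
          have h6 : α*(xs - x τ) ≤ -deriv f (x τ) := (mul_le_mul_iff_of_pos_right h).mp h5
          rw [show (β/α)*(1+γ)*δ = β*((1+γ)*δ)/α by ring, le_div_iff₀ hα]
          linarith
      have hr : f (x τ) - f xs ≤ β/2 * ((β/α)*(1+γ)*δ)^2 := by
        have h7 := hreg_ub (x τ)
        have h8 := mul_le_mul_of_nonneg_left (pow_le_pow_left₀ hd0τ hfl 2)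
          (by positivity : (0:ℝ) ≤ β/2)
        linarith
      have hTd : (T:ℝ)*δ^2 = 1 := by
        rw [hδsq]; field_simp
      have hmul : ((T:ℝ) - 2*(τ:ℝ)) * (f (x τ) - f xs)
          ≤ (T:ℝ) * (β/2 * ((β/α)*(1+γ)*δ)^2) :=
        mul_le_mul (by linarith) hr hregτ0 hTpos.le
      have heq2 : (T:ℝ) * (β/2 * ((β/α)*(1+γ)*δ)^2)
          = β^3*(1+γ)^2/(2*α^2) * ((T:ℝ)*δ^2) := by
        field_simp
      rw [heq2, hTd, mul_one] at hmul
      linarith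
    · -- τ = T/2
      have h1 : (T:ℝ) - 2*(τ:ℝ) ≤ 1 := by
        have h6 : T ≤ 2*τ + 1 := by omega
        have hc : (T:ℝ) ≤ 2*(τ:ℝ) + 1 := by exact_mod_cast h6
        linarith
      have hdτ : xs - x τ ≤ D*(β/α+1) := by
        have hpow1 : ρ^(τ-1) ≤ 1 := pow_le_one₀ hρ0 hρ1.le
        have h2 : ρ^(τ-1)*d1 ≤ d1 := by
          first
            | exact mul_le_of_le_one_left hd10 hpow1
            | nlinarith [pow_nonneg hρ0 (τ-1)]
        have h3 : δ*(β/α) ≤ D*(β/α) :=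
          mul_le_mul_of_nonneg_right hδD (by positivity)
        linarith [hdUτ, h2, h3, hd1D]
      have hr : f (x τ) - f xs ≤ β/2*(D*(β/α+1))^2 := by
        have h7 := hreg_ub (x τ)
        have h8 := mul_le_mul_of_nonneg_left (pow_le_pow_left₀ hd0τ hdτ 2)
          (by positivity : (0:ℝ) ≤ β/2)
        linarith
      have hmul : ((T:ℝ) - 2*(τ:ℝ)) * (f (x τ) - f xs) ≤ 1 * (β/2*(D*(β/α+1))^2) :=
        mul_le_mul h1 hr hregτ0 zero_le_one
      have heq2 : 1 * (β/2*(D*(β/α+1))^2) = β/2*D^2*(β/α+1)^2 := by ring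
      rw [heq2] at hmul
      linarith
  linarith [hsum3, hfinal]
end

section
/- Let 0 < α ≤ β, let f : ℝ → ℝ be differentiable, α-strongly convex, and β-smooth, let x* ∈ ℝ satisfy f'(x*) = 0, let δ > 0, γ > 1, and 0 < ε ≤ αδ²/4, and let N be a natural number. Let x : ℕ → ℝ be a sequence with x_1 ≤ x*, and suppose there are reals A_t, B_t (noisy estimates of f(x_t) and f(x_t − δ)) with |A_t − f(x_t)| ≤ ε/2 and |B_t − f(x_t − δ)| ≤ ε/2 such that, for every t < N, the estimated secant g_t = (A_t − B_t + ε)/δ satisfies −(1/β)·g_t ≥ (1 + γ)·δ and x_{t+1} = x_t − (1/β)·g_t − δ. Then for all t ≤ N: x_t ≤ x_{t+1} − δ (in particular the sampled points x_1 − δ, x_1, x_2 − δ, x_2, … are nondecreasing) and x_{t+1} ≤ x*. -/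
/-- Monotonicity / no-overshoot for Static Lagged Gradient
Descent under the accuracy event: with noisy estimates `A_t ≈ f(x_t)`,
`B_t ≈ f(x_t - δ)` accurate to within `ε/2` where `ε ≤ αδ²/4`, while the
estimated secant `g_t = (A_t - B_t + ε)/δ` is steep and
`x_{t+1} = x_t - (1/β)·g_t - δ`, the sampled points are nondecreasing
(`x_t ≤ x_{t+1} - δ`) and never overshoot `x*`. -/
theorem static_lgd_monotone_no_overshoot
    (α β : ℝ) (hα : 0 < α) (hαβ : α ≤ β)
    (f : ℝ → ℝ) (hf : Differentiable ℝ f)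
    (hsc : ∀ x y : ℝ, f y ≥ f x + deriv f x * (y - x) + α / 2 * (y - x) ^ 2)
    (hsm : ∀ x y : ℝ, f y ≤ f x + deriv f x * (y - x) + β / 2 * (y - x) ^ 2)
    (xs : ℝ) (hxs : deriv f xs = 0)
    (δ γ ε : ℝ) (hδ : 0 < δ) (hγ : 1 < γ) (hε : 0 < ε) (hεδ : ε ≤ α * δ ^ 2 / 4)
    (N : ℕ) (x : ℕ → ℝ) (hx1 : x 1 ≤ xs)
    (A B : ℕ → ℝ)
    (hA : ∀ t : ℕ, 1 ≤ t → |A t - f (x t)| ≤ ε / 2)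
    (hB : ∀ t : ℕ, 1 ≤ t → |B t - f (x t - δ)| ≤ ε / 2)
    (hstep : ∀ t : ℕ, 1 ≤ t → t < N →
      -(1 / β) * ((A t - B t + ε) / δ) ≥ (1 + γ) * δ ∧
      x (t + 1) = x t - (1 / β) * ((A t - B t + ε) / δ) - δ) :
    (∀ t : ℕ, 1 ≤ t → t < N → x t ≤ x (t + 1) - δ) ∧
    (∀ t : ℕ, 1 ≤ t → t ≤ N → x t ≤ xs) := by
  have hβ : (0:ℝ) < β := lt_of_lt_of_le hα hαβ
  have hmono : ∀ t : ℕ, 1 ≤ t → t < N → x t ≤ x (t + 1) - δ := by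
    intro t ht htN
    obtain ⟨hg, hxeq⟩ := hstep t ht htN
    have : x (t+1) - δ = x t + (-(1/β) * ((A t - B t + ε)/δ)) - 2*δ := by
      rw [hxeq]; ring
    rw [this]
    nlinarith
  have hkey : ∀ t : ℕ, 1 ≤ t → t < N → x t ≤ xs → x (t + 1) ≤ xs := by
    intro t ht htN hxt
    obtain ⟨hg, hxeq⟩ := hstep t ht htN
    have hA' := abs_le.mp (hA t ht)
    have hB' := abs_le.mp (hB t ht)
    set D := deriv f (x t) with hD
    have hd : -D ≤ β * (xs - x t) := by
      rcases eq_or_lt_of_le hxt with h | h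
      · rw [hD, h, hxs]; simp
      · have h1 := hsm (x t) xs
        have h3 := hsm xs (x t)
        rw [hxs] at h3
        have hDd : -(D * (xs - x t)) ≤ β * (xs - x t)^2 := by nlinarith
        nlinarith [mul_pos (sub_pos.mpr h) (sub_pos.mpr h), sub_pos.mpr h]
    have hsm1 := hsm (x t) (x t - δ)
    have hgge : D - β * δ / 2 ≤ (A t - B t + ε) / δ := by
      rw [le_div_iff₀ hδ]
      nlinarith
    have h5 : (1/β) * (D - β*δ/2) ≤ (1/β) * ((A t - B t + ε)/δ) :=
      mul_le_mul_of_nonneg_left hgge (by positivity)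
    have h6 : (1/β) * (D - β*δ/2) = D/β - δ/2 := by
      field_simp
    have h7 : -(D/β) ≤ xs - x t := by
      rw [show -(D/β) = (-D)/β by ring, div_le_iff₀ hβ]
      nlinarith
    rw [hxeq]
    have h8 : -((1/β) * ((A t - B t + ε)/δ)) ≤ -(D/β - δ/2) := by linarith [h6 ▸ h5]
    linarith
  have hover : ∀ t : ℕ, 1 ≤ t → t ≤ N → x t ≤ xs := by
    intro t
    induction t with
    | zero => intro h; omega
    | succ n ih =>
      intro _ h2
      rcases Nat.eq_zero_or_pos n with hn | hn
      · subst hn; exact hx1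
      · exact hkey n hn (by omega) (ih hn (by omega))
  exact ⟨hmono, hover⟩
end

section
/- Let 0 < α ≤ β, let f : ℝ → ℝ be differentiable, α-strongly convex, and β-smooth, let x* ∈ ℝ satisfy f'(x*) = 0, let δ > 0, γ > 1, and 0 < ε ≤ αδ²/4, and let N be a natural number. Let x : ℕ → ℝ be a sequence with x_1 ≤ x*, and suppose there are reals A_t, B_t with |A_t − f(x_t)| ≤ ε/2 and |B_t − f(x_t − δ)| ≤ ε/2 such that, for every t < N, the estimated secant g_t = (A_t − B_t + ε)/δ satisfies −(1/β)·g_t ≥ (1 + γ)·δ and x_{t+1} = x_t − (1/β)·g_t − δ. Define h_t = f(x_t) − f(x*) and c = 1/(2β) − 1/((1 + γ)β). Then for all t ≤ N, h_{t+1} ≤ h_1 · exp(−2αc·t). -/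
set_option maxHeartbeats 1000000 in
/-- Exponential convergence of Static Lagged Gradient Descent
under the accuracy event: with the same iteration as in the monotonicity claim,
the optimality gap `h_t = f(x_t) - f(x*)` satisfies
`h_{t+1} ≤ h_1 · exp(-2αc·t)` with `c = 1/(2β) - 1/((1+γ)β)`. -/
theorem static_lgd_exponential_convergence
    (α β : ℝ) (hα : 0 < α) (hαβ : α ≤ β)
    (f : ℝ → ℝ) (hf : Differentiable ℝ f)
    (hsc : ∀ x y : ℝ, f y ≥ f x + deriv f x * (y - x) + α / 2 * (y - x) ^ 2)
    (hsm : ∀ x y : ℝ, f y ≤ f x + deriv f x * (y - x) + β / 2 * (y - x) ^ 2)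
    (xs : ℝ) (hxs : deriv f xs = 0)
    (δ γ ε : ℝ) (hδ : 0 < δ) (hγ : 1 < γ) (hε : 0 < ε) (hεδ : ε ≤ α * δ ^ 2 / 4)
    (N : ℕ) (x : ℕ → ℝ) (hx1 : x 1 ≤ xs)
    (A B : ℕ → ℝ)
    (hA : ∀ t : ℕ, 1 ≤ t → |A t - f (x t)| ≤ ε / 2)
    (hB : ∀ t : ℕ, 1 ≤ t → |B t - f (x t - δ)| ≤ ε / 2)
    (hstep : ∀ t : ℕ, 1 ≤ t → t < N →
      -(1 / β) * ((A t - B t + ε) / δ) ≥ (1 + γ) * δ ∧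
      x (t + 1) = x t - (1 / β) * ((A t - B t + ε) / δ) - δ)
    (c : ℝ) (hc : c = 1 / (2 * β) - 1 / ((1 + γ) * β)) :
    ∀ t : ℕ, 1 ≤ t → t < N →
      f (x (t + 1)) - f xs ≤ (f (x 1) - f xs) * Real.exp (-(2 * α * c * t)) := by
  have hβ : 0 < β := hα.trans_le hαβ
  have hγ1 : (0:ℝ) < 1 + γ := by linarith
  -- nonnegativity of the gap
  have hnn : ∀ y : ℝ, 0 ≤ f y - f xs := by
    intro y
    have h := hsc xs y
    rw [hxs] at h
    nlinarith [sq_nonneg (y - xs)]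
  -- PL inequality
  have hPL : ∀ y : ℝ, 2 * α * (f y - f xs) ≤ (deriv f y) ^ 2 := by
    intro y
    have h := hsc y xs
    nlinarith [sq_nonneg (deriv f y + α * (xs - y))]
  -- bounds on c
  have hcpos : 0 ≤ c := by
    rw [hc]
    have h1 : 1 / ((1 + γ) * β) ≤ 1 / (2 * β) := by
      apply one_div_le_one_div_of_le (by positivity)
      nlinarith
    linarith
  have h2ac : 2 * α * c ≤ 1 := by
    have hc1 : c ≤ 1 / (2 * β) := by
      rw [hc]
      have : 0 ≤ 1 / ((1 + γ) * β) := by positivity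
      linarith
    have h2 : 2 * α * c ≤ 2 * α * (1 / (2 * β)) := by
      apply mul_le_mul_of_nonneg_left hc1 (by linarith)
    have h3 : 2 * α * (1 / (2 * β)) = α / β := by field_simp
    have h4 : α / β ≤ 1 := by rw [div_le_one hβ]; exact hαβ
    linarith
  -- per-step contraction
  have hstep' : ∀ t : ℕ, 1 ≤ t → t < N →
      f (x (t + 1)) - f xs ≤ (1 - 2 * α * c) * (f (x t) - f xs) := by
    intro t ht htN
    obtain ⟨hg, hxe⟩ := hstep t ht htN
    have hAt := abs_le.mp (hA t ht)
    have hBt := abs_le.mp (hB t ht)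
    set g := (A t - B t + ε) / δ with hgdef
    have hgδ : g * δ = A t - B t + ε := by rw [hgdef]; field_simp
    have hsc1 := hsc (x t) (x t - δ)
    have hsc2 := hsc (x t - δ) (x t)
    have hsm2 := hsm (x t) (x t - δ)
    have hsm3 := hsm (x t - δ) (x t)
    -- g ≤ f'(x t)
    have hgle : g ≤ deriv f (x t) := by
      have h1 : g * δ ≤ deriv f (x t) * δ := by
        rw [hgδ]; linarith [hAt.1, hAt.2, hBt.1, hBt.2, hsc1, hεδ]
      exact le_of_mul_le_mul_right h1 hδ
    -- f'(x t) ≤ g + βδ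
    have hgge : deriv f (x t) ≤ g + β * δ := by
      have h1 : deriv f (x t - δ) * δ ≤ g * δ := by
        rw [hgδ]; linarith [hAt.1, hAt.2, hBt.1, hBt.2, hsc2]
      have h2 : deriv f (x t - δ) ≤ g := le_of_mul_le_mul_right h1 hδ
      have h3 : (deriv f (x t) - deriv f (x t - δ)) * δ ≤ (β * δ) * δ := by
        linarith [hsm2, hsm3]
      have h4 : deriv f (x t) - deriv f (x t - δ) ≤ β * δ := le_of_mul_le_mul_right h3 hδ
      linarith
    -- the step size
    set s := x (t + 1) - x t with hsdef
    have hβs : β * s = -g - β * δ := by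
      rw [hsdef, hxe]; field_simp; ring
    -- -g ≥ (1+γ)βδ
    have hgneg : (1 + γ) * β * δ ≤ -g := by
      have h1 : (1 + γ) * δ ≤ -g / β := by
        have h2 : -(1/β) * g = -g / β := by ring
        linarith [hg, h2.symm.le]
      have := (le_div_iff₀ hβ).mp h1
      linarith
    set d := deriv f (x t) with hddef
    have hW1 : β * s ≤ -d := by linarith [hβs, hgge]
    have hW2 : γ * (-d) ≤ (γ + 1) * (β * s) := by
      have h1 : -d ≤ -g := by linarith [hgle]
      have h2 : γ * β * δ ≤ β * s := by linarith [hβs, hgneg]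
      nlinarith [mul_le_mul_of_nonneg_left h1 (by linarith : (0:ℝ) ≤ γ)]
    have hWpos : 0 < β * s := by nlinarith
    have hspos : 0 < s := by nlinarith [hWpos]
    -- key cleared inequality
    have hCK : (γ - 1) * d ^ 2 ≤ (γ + 1) * (2 * (-d) * (β * s) - (β * s) ^ 2) := by
      nlinarith [mul_nonneg (by linarith : (0:ℝ) ≤ -d - β * s)
        (by linarith : (0:ℝ) ≤ (γ + 1) * (β * s) - γ * (-d)), hWpos,
        mul_pos hWpos (by nlinarith : (0:ℝ) < -d)]
    -- divided form
    have hK : c * d ^ 2 ≤ (-d) * s - β / 2 * s ^ 2 := by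
      have h2 : (0:ℝ) < 2 * β * (γ + 1) := by positivity
      rw [← mul_le_mul_iff_of_pos_right h2]
      have e1 : c * d ^ 2 * (2 * β * (γ + 1)) = (γ - 1) * d ^ 2 := by
        rw [hc]; field_simp; ring
      have e2 : ((-d) * s - β / 2 * s ^ 2) * (2 * β * (γ + 1))
          = (γ + 1) * (2 * (-d) * (β * s) - (β * s) ^ 2) := by ring
      rw [e1, e2]; exact hCK
    -- smoothness descent
    have hsm1 := hsm (x t) (x (t + 1))
    have hdec : c * d ^ 2 ≤ f (x t) - f (x (t + 1)) := by
      have : f (x (t + 1)) ≤ f (x t) + d * s + β / 2 * s ^ 2 := hsm1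
      linarith [hK]
    have hPLt := hPL (x t)
    have hmul : c * (2 * α * (f (x t) - f xs)) ≤ c * d ^ 2 :=
      mul_le_mul_of_nonneg_left hPLt hcpos
    nlinarith [hdec, hmul]
  -- induction
  have hexp : 1 - 2 * α * c ≤ Real.exp (-(2 * α * c)) := by
    linarith [Real.add_one_le_exp (-(2 * α * c))]
  have hcub : 0 ≤ 1 - 2 * α * c := by linarith
  intro t ht htN
  induction t, ht using Nat.le_induction with
  | base =>
    have h := hstep' 1 le_rfl htN
    have h1 := hnn (x 1)
    have : f (x 2) - f xs ≤ (f (x 1) - f xs) * Real.exp (-(2 * α * c)) := by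
      calc f (x 2) - f xs ≤ (1 - 2 * α * c) * (f (x 1) - f xs) := h
        _ ≤ Real.exp (-(2 * α * c)) * (f (x 1) - f xs) :=
            mul_le_mul_of_nonneg_right hexp h1
        _ = (f (x 1) - f xs) * Real.exp (-(2 * α * c)) := by ring
    simpa using this
  | succ t ht ih =>
    have htN' : t < N := by omega
    have ih' := ih htN'
    have h := hstep' (t + 1) (by omega) htN
    have h1 := hnn (x 1)
    have hepos : (0:ℝ) < Real.exp (-(2 * α * c * t)) := Real.exp_pos _
    calc f (x (t + 1 + 1)) - f xs
        ≤ (1 - 2 * α * c) * (f (x (t + 1)) - f xs) := h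
      _ ≤ (1 - 2 * α * c) * ((f (x 1) - f xs) * Real.exp (-(2 * α * c * t))) :=
          mul_le_mul_of_nonneg_left ih' hcub
      _ ≤ Real.exp (-(2 * α * c)) * ((f (x 1) - f xs) * Real.exp (-(2 * α * c * t))) :=
          mul_le_mul_of_nonneg_right hexp (mul_nonneg h1 hepos.le)
      _ = (f (x 1) - f xs) * Real.exp (-(2 * α * c * (t + 1 : ℕ))) := by
          push_cast
          rw [show (-(2 * α * c * ((t:ℝ) + 1))) = (-(2 * α * c)) + (-(2 * α * c * (t:ℝ))) by ring,
            Real.exp_add]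
          ring
end

section
/- Let 0 < α ≤ β, let f : ℝ → ℝ be differentiable, α-strongly convex, and β-smooth, let x ∈ ℝ, δ > 0, and γ > 1, and let g, g' ∈ ℝ satisfy g ≤ f'(x) and f'(x − δ) ≤ g'. If −(1/β)·g' ≥ (2 + γ)·δ, then −(1/β)·g ≥ (1 + γ)·δ; consequently x − (1/β)·g − 2δ ≥ x + (γ − 1)δ > x, i.e. a lagged jump of the form x ↦ x − (1/β)·g − 2δ does not violate monotonicity. -/
/-- Per-step monotonicity for Adaptive Lagged Gradient
Descent: if `g ≤ f'(x)`, `f'(x - δ) ≤ g'`, and the jump condition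
`-(1/β)·g' ≥ (2+γ)δ` holds, then `-(1/β)·g ≥ (1+γ)δ`, hence the lagged jump
`x ↦ x - (1/β)·g - 2δ` moves strictly forward: it lands at or above
`x + (γ-1)δ > x`. -/
theorem adaptive_lgd_step_monotone
    (α β : ℝ) (hα : 0 < α) (hαβ : α ≤ β)
    (f : ℝ → ℝ) (hf : Differentiable ℝ f)
    (hsc : ∀ x y : ℝ, f y ≥ f x + deriv f x * (y - x) + α / 2 * (y - x) ^ 2)
    (hsm : ∀ x y : ℝ, f y ≤ f x + deriv f x * (y - x) + β / 2 * (y - x) ^ 2)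
    (x δ γ : ℝ) (hδ : 0 < δ) (hγ : 1 < γ)
    (g g' : ℝ) (hg : g ≤ deriv f x) (hg' : deriv f (x - δ) ≤ g')
    (hjump : -(1 / β) * g' ≥ (2 + γ) * δ) :
    -(1 / β) * g ≥ (1 + γ) * δ ∧
    x - (1 / β) * g - 2 * δ ≥ x + (γ - 1) * δ ∧
    x < x - (1 / β) * g - 2 * δ := by
  have hβ : 0 < β := lt_of_lt_of_le hα hαβ
  have h1 := hsm (x - δ) x
  have h2 := hsm x (x - δ)
  have hδ2 : deriv f x * δ ≤ deriv f (x - δ) * δ + β * δ * δ := by nlinarith [mul_le_mul_of_nonneg_right hαβ (mul_pos hδ hδ).le]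
  have hlip : deriv f x ≤ deriv f (x - δ) + β * δ := by
    have := (div_le_div_iff_of_pos_right hδ).mpr hδ2
    calc deriv f x = deriv f x * δ / δ := by field_simp
      _ ≤ (deriv f (x - δ) * δ + β * δ * δ) / δ := by
          apply div_le_div_of_nonneg_right hδ2 hδ.le |>.trans_eq rfl
      _ = deriv f (x - δ) + β * δ := by field_simp
  have hβinv : (1 / β) * β = 1 := one_div_mul_cancel (ne_of_gt hβ)
  have hβinvpos : 0 < 1 / β := one_div_pos.mpr hβ
  have hkey : -(1 / β) * g ≥ (1 + γ) * δ := by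
    have hbb : β * (-(1 / β) * g') = -g' := by field_simp
    have hg'' : g' ≤ -(β * ((2 + γ) * δ)) := by
      have := mul_le_mul_of_nonneg_left hjump (le_of_lt hβ)
      linarith [hbb ▸ this]
    have hgb : g ≤ -(β * ((1 + γ) * δ)) := by nlinarith
    nlinarith [mul_le_mul_of_nonneg_left hgb (le_of_lt hβinvpos)]
  refine ⟨hkey, by linarith, by nlinarith⟩
end

section
/- Let 0 < α ≤ β, let f : ℝ → ℝ be differentiable, α-strongly convex, and β-smooth, and let x* ∈ ℝ satisfy f'(x*) = 0. Fix δ > 0 and γ > 1, let x ≤ x*, let x̄ ∈ [x − δ, x], and set g = f'(x̄). Suppose −(1/β)·g ≥ (1 + γ)·δ, and let y = x − (1/β)·g − δ. Then, with c = 1/(2β) − 1/((1 + γ)β), we have f(y) − f(x*) ≤ (1 − 2αc)·(f(x) − f(x*)), and moreover 0 < 1 − 2αc < 1. -/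
set_option maxHeartbeats 1600000 in
/-- Per-step contraction of the lagged gradient-descent jump:
if `x ≤ x*`, `g = f'(x̄)` for some `x̄ ∈ [x - δ, x]`, the step condition
`-(1/β)·g ≥ (1+γ)δ` holds, and `y = x - (1/β)·g - δ`, then the optimality gap
contracts: `f(y) - f(x*) ≤ (1 - 2αc)(f(x) - f(x*))` with
`c = 1/(2β) - 1/((1+γ)β)`, and `0 < 1 - 2αc < 1`. -/
theorem lgd_step_contraction
    (α β : ℝ) (hα : 0 < α) (hαβ : α ≤ β)
    (f : ℝ → ℝ) (hf : Differentiable ℝ f)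
    (hsc : ∀ x y : ℝ, f y ≥ f x + deriv f x * (y - x) + α / 2 * (y - x) ^ 2)
    (hsm : ∀ x y : ℝ, f y ≤ f x + deriv f x * (y - x) + β / 2 * (y - x) ^ 2)
    (xs : ℝ) (hxs : deriv f xs = 0)
    (δ γ : ℝ) (hδ : 0 < δ) (hγ : 1 < γ)
    (x : ℝ) (hx : x ≤ xs)
    (xbar : ℝ) (hxbar : xbar ∈ Set.Icc (x - δ) x)
    (g : ℝ) (hg : g = deriv f xbar)
    (hstep : -(1 / β) * g ≥ (1 + γ) * δ)
    (y : ℝ) (hy : y = x - (1 / β) * g - δ)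
    (c : ℝ) (hc : c = 1 / (2 * β) - 1 / ((1 + γ) * β)) :
    f y - f xs ≤ (1 - 2 * α * c) * (f x - f xs) ∧
    0 < 1 - 2 * α * c ∧ 1 - 2 * α * c < 1 := by
  have hβ : (0:ℝ) < β := lt_of_lt_of_le hα hαβ
  have hγ0 : (0:ℝ) < 1 + γ := by linarith
  obtain ⟨hx1, hx2⟩ := hxbar
  -- step condition multiplied out: (1+γ) β δ ≤ -g
  have hstep' : (1 + γ) * (β * δ) ≤ -g := by
    have hb : β * (-(1 / β) * g) = -g := by field_simp
    calc (1 + γ) * (β * δ) = β * ((1 + γ) * δ) := by ring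
      _ ≤ β * (-(1 / β) * g) := mul_le_mul_of_nonneg_left hstep hβ.le
      _ = -g := hb
  have hgneg : g < 0 := by nlinarith [mul_pos (mul_pos hγ0 hβ) hδ]
  -- c positive, 2αc < 1
  have hcpos : 0 < c := by
    rw [hc]
    have h1 : 1 / ((1 + γ) * β) < 1 / (2 * β) := by
      apply one_div_lt_one_div_of_lt
      · positivity
      · nlinarith
    linarith
  have hcval : 2 * β * (1 + γ) * c = γ - 1 := by
    rw [hc]; field_simp; ring
  have h2ac : 2 * α * c < 1 := by
    have h1 : 2 * α * c ≤ 2 * β * c := by nlinarith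
    nlinarith
  refine ⟨?_, by nlinarith, by nlinarith⟩
  -- main inequality
  obtain ⟨s, hs⟩ : ∃ s : ℝ, s = y - x := ⟨_, rfl⟩
  have hsval : β * s = -g - β * δ := by
    rw [hs, hy]; field_simp; ring
  have hspos : 0 < s := by nlinarith [mul_pos (mul_pos hγ0 hβ) hδ, mul_pos hβ hδ]
  -- derivative bound at x: f'(x) ≤ g + βδ
  have hd1 := hsm xbar x
  have hd2 := hsm x xbar
  rw [← hg] at hd1
  have hd : (deriv f x - g) * (x - xbar) ≤ β * (x - xbar) ^ 2 := by
    nlinarith [hd1, hd2]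
  have hdx : deriv f x ≤ g + β * δ := by
    rcases eq_or_lt_of_le hx2 with h | h
    · have hge : deriv f x = g := by rw [hg, h]
      have : 0 < β * δ := mul_pos hβ hδ
      linarith
    · have hd' : 0 ≤ β * (x - xbar) * (δ - (x - xbar)) :=
        mul_nonneg (mul_nonneg hβ.le (by linarith)) (by linarith)
      have h6 : (deriv f x - g) * (x - xbar) ≤ (g + β * δ - g) * (x - xbar) := by
        nlinarith [hd, hd']
      have h7 := le_of_mul_le_mul_right h6 (sub_pos.mpr h)
      linarith
  have hdxneg : deriv f x ≤ 0 := by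
    nlinarith [mul_pos (show (0:ℝ) < γ by linarith) (mul_pos hβ hδ)]
  -- smoothness at x towards y: f y ≤ f x - (β/2) s²
  have hsmxy := hsm x y
  rw [← hs] at hsmxy
  have hkey1 : f y ≤ f x - β / 2 * s ^ 2 := by
    have hmul : deriv f x * s ≤ (g + β * δ) * s :=
      mul_le_mul_of_nonneg_right hdx hspos.le
    have heq : (g + β * δ) * s = -(β * s) * s := by rw [hsval]; ring
    nlinarith [hsmxy, hmul]
  -- (β/2) s² ≥ c g²
  have hkey2 : c * g ^ 2 ≤ β / 2 * s ^ 2 := by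
    have h2 : (1 + γ) * (β * s) ^ 2 - (γ - 1) * g ^ 2
        = 2 * (-g) ^ 2 - 2 * (1 + γ) * (-g) * (β * δ) + (1 + γ) * (β * δ) ^ 2 := by
      rw [hsval]; ring
    have h3 : (γ - 1) * g ^ 2 ≤ (1 + γ) * (β * s) ^ 2 := by
      nlinarith [mul_pos hβ hδ, sq_nonneg (β * δ),
        mul_le_mul_of_nonneg_left hstep' (le_of_lt (neg_pos.mpr hgneg))]
    have h4 : 2 * β * (1 + γ) * (c * g ^ 2) = (γ - 1) * g ^ 2 := by
      rw [hc]; field_simp; ring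
    have h5 : 2 * β * (1 + γ) * (c * g ^ 2) ≤ 2 * β * (1 + γ) * (β / 2 * s ^ 2) := by
      rw [h4]
      calc (γ - 1) * g ^ 2 ≤ (1 + γ) * (β * s) ^ 2 := h3
        _ = 2 * β * (1 + γ) * (β / 2 * s ^ 2) := by ring
    exact le_of_mul_le_mul_left h5 (by nlinarith [mul_pos hβ hγ0])
  -- PL: 2α (f x̄ - f xs) ≤ g²
  have hpl := hsc xbar xs
  rw [← hg] at hpl
  have hPL : 2 * α * (f xbar - f xs) ≤ g ^ 2 := by
    nlinarith [sq_nonneg (α * (xs - xbar) + g)]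
  -- f x ≤ f x̄ and f xs ≤ f x
  have hfx : f x ≤ f xbar := by
    have h := hsc x xbar
    nlinarith [sq_nonneg (xbar - x),
      mul_nonneg (neg_nonneg.mpr hdxneg) (sub_nonneg.mpr hx2)]
  have hfxs : f xs ≤ f x := by
    have h := hsc xs x
    rw [hxs] at h
    nlinarith [sq_nonneg (x - xs)]
  -- combine
  have hgap : 2 * α * (f x - f xs) ≤ g ^ 2 := by nlinarith
  have hcg : 2 * α * c * (f x - f xs) ≤ c * g ^ 2 := by
    nlinarith [mul_le_mul_of_nonneg_left hgap hcpos.le]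
  linarith [hkey1, hkey2, hcg]
end
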